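/- arXiv:2103.14911 — 2 statements merged into one kernel-verified Lean document; each statement's English description precedes it below -/
import Mathlib

section
/- Let G be a subgroup of the group of homeomorphisms of the real line (or of [0,1]) and let X be a compact subset of the support of G (the set of points moved by some element of G). Then there exists g ∈ G such that for every nonzero integer k, the image of X under g^k is disjoint from X. -/
open Set

namespace Stmt0Proof

abbrev αI : Type := ↥(Set.Icc (0:ℝ) 1)

def supt (G : Subgroup (Equiv.Perm αI)) : Set αI := {x | ∃ g ∈ G, g x ≠ x}

def a0 : αI := ⟨0, by norm_num⟩
def a1 : αI := ⟨1, by norm_num⟩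

lemma le_a1 (y : αI) : y ≤ a1 := Subtype.coe_le_coe.mp y.2.2
lemma a0_le (y : αI) : a0 ≤ y := Subtype.coe_le_coe.mp y.2.1

lemma bot_fixed (g : Equiv.Perm αI) (hm : Monotone ⇑g) : g a0 = a0 := by
  have h1 : g a0 ≤ g (g⁻¹ a0) := hm (a0_le _)
  simp only [Equiv.Perm.coe_inv, Equiv.apply_symm_apply] at h1
  exact le_antisymm h1 (a0_le _)

lemma top_fixed (g : Equiv.Perm αI) (hm : Monotone ⇑g) : g a1 = a1 := by
  have h1 : g (g⁻¹ a1) ≤ g a1 := hm (le_a1 _)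
  simp only [Equiv.Perm.coe_inv, Equiv.apply_symm_apply] at h1
  exact le_antisymm (le_a1 _) h1

lemma exists_sup (S : Set αI) (hne : S.Nonempty) :
    ∃ s : αI, (∀ y ∈ S, y ≤ s) ∧ ∀ b : αI, (∀ y ∈ S, y ≤ b) → s ≤ b := by
  have hbdd : BddAbove (Subtype.val '' S) := ⟨1, by rintro y ⟨z, hz, rfl⟩; exact z.2.2⟩
  have hne' : (Subtype.val '' S).Nonempty := hne.image _
  obtain ⟨z0, hz0⟩ := hne
  have h0 : (0:ℝ) ≤ sSup (Subtype.val '' S) :=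
    le_trans z0.2.1 (le_csSup hbdd ⟨z0, hz0, rfl⟩)
  have h1 : sSup (Subtype.val '' S) ≤ 1 :=
    csSup_le hne' (by rintro y ⟨z, hz, rfl⟩; exact z.2.2)
  refine ⟨⟨_, h0, h1⟩, ?_, ?_⟩
  · intro y hy; exact Subtype.coe_le_coe.mp (le_csSup hbdd ⟨y, hy, rfl⟩)
  · intro b hb
    exact Subtype.coe_le_coe.mp
      (csSup_le hne' (by rintro y ⟨z, hz, rfl⟩; exact Subtype.coe_le_coe.mpr (hb z hz)))

lemma exists_inf (S : Set αI) (hne : S.Nonempty) :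
    ∃ s : αI, (∀ y ∈ S, s ≤ y) ∧ ∀ b : αI, (∀ y ∈ S, b ≤ y) → b ≤ s := by
  have hbdd : BddBelow (Subtype.val '' S) := ⟨0, by rintro y ⟨z, hz, rfl⟩; exact z.2.1⟩
  have hne' : (Subtype.val '' S).Nonempty := hne.image _
  obtain ⟨z0, hz0⟩ := hne
  have h1 : sInf (Subtype.val '' S) ≤ 1 :=
    le_trans (csInf_le hbdd ⟨z0, hz0, rfl⟩) z0.2.2
  have h0 : (0:ℝ) ≤ sInf (Subtype.val '' S) :=
    le_csInf hne' (by rintro y ⟨z, hz, rfl⟩; exact z.2.1)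
  refine ⟨⟨_, h0, h1⟩, ?_, ?_⟩
  · intro y hy; exact Subtype.coe_le_coe.mp (csInf_le hbdd ⟨y, hy, rfl⟩)
  · intro b hb
    exact Subtype.coe_le_coe.mp
      (le_csInf hne' (by rintro y ⟨z, hz, rfl⟩; exact Subtype.coe_le_coe.mpr (hb z hz)))

lemma exists_between' {a b : αI} (h : a < b) : ∃ c, a < c ∧ c < b := by
  have hab : (a:ℝ) < b := Subtype.coe_lt_coe.mpr h
  refine ⟨⟨((a:ℝ) + b)/2, ?_, ?_⟩, ?_, ?_⟩
  · have := a.2.1; linarith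
  · have := b.2.2; linarith
  · exact Subtype.coe_lt_coe.mp (by dsimp; linarith)
  · exact Subtype.coe_lt_coe.mp (by dsimp; linarith)


variable {G : Subgroup (Equiv.Perm αI)}

lemma smono (hmono : ∀ g ∈ G, Monotone ⇑g) {g : Equiv.Perm αI} (hg : g ∈ G) :
    StrictMono ⇑g := (hmono g hg).strictMono_of_injective g.injective

lemma escape (hmono : ∀ g ∈ G, Monotone ⇑g) (u v : αI) (huv : u ≤ v)
    (hsub : Set.Icc u v ⊆ supt G) : ∃ g ∈ G, v < g u := by
  obtain ⟨s, hub, hlst⟩ := exists_sup {y | ∃ g ∈ G, g u = y} ⟨u, 1, G.one_mem, rfl⟩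
  have key : ∀ h ∈ G, h s ≤ s := by
    intro h hh
    have h1 : ∀ g ∈ G, g u ≤ h⁻¹ s := by
      intro g hg
      have h2 : (h * g) u ≤ s := hub _ ⟨h * g, G.mul_mem hh hg, rfl⟩
      have h3 := (hmono h⁻¹ (G.inv_mem hh)) h2
      simpa [Equiv.Perm.mul_apply] using h3
    have h2 : s ≤ h⁻¹ s := hlst _ (by rintro y ⟨g, hg, rfl⟩; exact h1 g hg)
    have h3 := (hmono h hh) h2
    simpa using h3
  have hfix : ∀ h ∈ G, h s = s := by
    intro h hh
    refine le_antisymm (key h hh) ?_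
    have h4 := key h⁻¹ (G.inv_mem hh)
    have h5 := (hmono h hh) h4
    simpa using h5
  have hns : s ∉ supt G := by rintro ⟨g, hg, hgs⟩; exact hgs (hfix g hg)
  have hus : u ≤ s := hub u ⟨1, G.one_mem, rfl⟩
  by_contra hcon
  push_neg at hcon
  have hsv : s ≤ v := hlst v (by rintro y ⟨g, hg, rfl⟩; exact hcon g hg)
  exact hns (hsub ⟨hus, hsv⟩)

lemma pow_apply_succ (c : Equiv.Perm αI) (k : ℕ) (z : αI) :
    (c ^ (k+1)) z = (c ^ k) (c z) := by
  rw [pow_succ, Equiv.Perm.mul_apply]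

lemma pow_apply_succ' (c : Equiv.Perm αI) (k : ℕ) (z : αI) :
    (c ^ (k+1)) z = c ((c ^ k) z) := by
  rw [pow_succ', Equiv.Perm.mul_apply]

lemma stab_up (hmono : ∀ g ∈ G, Monotone ⇑g) {f : Equiv.Perm αI} (hf : f ∈ G)
    {u v : αI} (huv : u ≤ v) (h : v < f u) : ∀ k : ℕ, 1 ≤ k → v < (f ^ k) u := by
  have hu : u ≤ f u := huv.trans h.le
  have main : ∀ k : ℕ, v < (f ^ (k+1)) u := by
    intro k
    induction k with
    | zero => simpa using h
    | succ k ih =>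
      have h2 : (f ^ (k+1)) u ≤ (f ^ (k+1)) (f u) := (hmono _ (pow_mem hf _)) hu
      rw [← pow_apply_succ] at h2
      calc v < (f ^ (k+1)) u := ih
        _ ≤ (f ^ (k+1+1)) u := by
            have : (f ^ (k+1)) (f u) = (f ^ (k+1+1)) u := (pow_apply_succ f (k+1) u).symm
            rw [← this]; exact h2
  intro k hk
  obtain ⟨j, rfl⟩ := Nat.exists_eq_add_of_le hk
  simpa [Nat.add_comm] using main j

lemma stab_down (hmono : ∀ g ∈ G, Monotone ⇑g) {f : Equiv.Perm αI} (hf : f ∈ G)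
    {u v : αI} (huv : u ≤ v) (h : f v < u) : ∀ k : ℕ, 1 ≤ k → (f ^ k) v < u := by
  have hv : f v ≤ v := (h.trans_le huv).le
  have main : ∀ k : ℕ, (f ^ (k+1)) v < u := by
    intro k
    induction k with
    | zero => simpa using h
    | succ k ih =>
      have h2 : (f ^ (k+1)) (f v) ≤ (f ^ (k+1)) v := (hmono _ (pow_mem hf _)) hv
      rw [← pow_apply_succ] at h2
      exact lt_of_le_of_lt h2 ih
  intro k hk
  obtain ⟨j, rfl⟩ := Nat.exists_eq_add_of_le hk
  simpa [Nat.add_comm] using main j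

lemma blocking (hmono : ∀ g ∈ G, Monotone ⇑g) {c : Equiv.Perm αI} (hc : c ∈ G)
    {u v : αI} (huv : u ≤ v)
    (h1 : ∀ k : ℕ, 1 ≤ k → ¬ v < (c ^ k) u) (h2 : ∀ k : ℕ, 1 ≤ k → ¬ (c ^ k) v < u) :
    ∃ w, u ≤ w ∧ w ≤ v ∧ c w = w := by
  by_cases hcu : u ≤ c u
  · -- increasing orbit of u
    obtain ⟨w, hub, hlst⟩ := exists_sup {y | ∃ k : ℕ, (c ^ k) u = y} ⟨u, 0, by simp⟩
    have hbound : ∀ y ∈ {y | ∃ k : ℕ, (c ^ k) u = y}, y ≤ v := by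
      rintro y ⟨k, rfl⟩
      match k with
      | 0 => simpa using huv
      | k+1 => exact le_of_not_gt (h1 (k+1) (by omega))
    have huw : u ≤ w := hub u ⟨0, by simp⟩
    have hwv : w ≤ v := hlst v hbound
    have hcw_le : c w ≤ w := by
      have hstep : ∀ y ∈ {y | ∃ k : ℕ, (c ^ k) u = y}, y ≤ c⁻¹ w := by
        rintro y ⟨k, rfl⟩
        have : (c ^ (k+1)) u ≤ w := hub _ ⟨k+1, rfl⟩
        rw [pow_apply_succ'] at this
        have h4 := (hmono c⁻¹ (G.inv_mem hc)) this
        simpa using h4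
      have h5 : w ≤ c⁻¹ w := hlst _ hstep
      have h6 := (hmono c hc) h5
      simpa using h6
    have hle_cw : w ≤ c w := by
      refine hlst _ ?_
      rintro y ⟨k, rfl⟩
      match k with
      | 0 => simpa using hcu.trans ((hmono c hc) huw)
      | k+1 =>
        rw [pow_apply_succ']
        exact (hmono c hc) (hub _ ⟨k, rfl⟩)
    exact ⟨w, huw, hwv, le_antisymm hcw_le hle_cw⟩
  · push_neg at hcu
    by_cases hcv : c v ≤ v
    · -- decreasing orbit of v
      obtain ⟨w, hlb, hgst⟩ := exists_inf {y | ∃ k : ℕ, (c ^ k) v = y} ⟨v, 0, by simp⟩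
      have hbound : ∀ y ∈ {y | ∃ k : ℕ, (c ^ k) v = y}, u ≤ y := by
        rintro y ⟨k, rfl⟩
        match k with
        | 0 => simpa using huv
        | k+1 => exact le_of_not_gt (h2 (k+1) (by omega))
      have hwv : w ≤ v := hlb v ⟨0, by simp⟩
      have huw : u ≤ w := hgst u hbound
      have hcw_ge : w ≤ c w := by
        have hstep : ∀ y ∈ {y | ∃ k : ℕ, (c ^ k) v = y}, c⁻¹ w ≤ y := by
          rintro y ⟨k, rfl⟩
          have : w ≤ (c ^ (k+1)) v := hlb _ ⟨k+1, rfl⟩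
          rw [pow_apply_succ'] at this
          have h4 := (hmono c⁻¹ (G.inv_mem hc)) this
          simpa using h4
        have h5 : c⁻¹ w ≤ w := hgst _ hstep
        have h6 := (hmono c hc) h5
        simpa using h6
      have hcw_le : c w ≤ w := by
        refine hgst _ ?_
        rintro y ⟨k, rfl⟩
        match k with
        | 0 => simpa using ((hmono c hc) hwv).trans hcv
        | k+1 =>
          rw [pow_apply_succ']
          exact (hmono c hc) (hlb _ ⟨k, rfl⟩)
      exact ⟨w, huw, hwv, le_antisymm hcw_le hcw_ge⟩
    · push_neg at hcv
      -- c u < u, v < c v : fixed point by crossing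
      obtain ⟨w, hub, hlst⟩ :=
        exists_sup {y | u ≤ y ∧ y ≤ v ∧ c y ≤ y} ⟨u, le_refl u, huv, hcu.le⟩
      have huw : u ≤ w := hub u ⟨le_refl u, huv, hcu.le⟩
      have hwv : w ≤ v := hlst v (fun y hy => hy.2.1)
      have hcw_le : c w ≤ w := by
        have hstep : ∀ y ∈ {y | u ≤ y ∧ y ≤ v ∧ c y ≤ y}, y ≤ c⁻¹ w := by
          rintro y ⟨_, _, hcy⟩
          have h4 := (hmono c⁻¹ (G.inv_mem hc)) (hcy.trans (hub y ⟨‹u ≤ y›, ‹y ≤ v›, hcy⟩))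
          simpa using h4
        have h5 : w ≤ c⁻¹ w := hlst _ hstep
        have h6 := (hmono c hc) h5
        simpa using h6
      refine ⟨w, huw, hwv, ?_⟩
      by_contra hne
      have hcw_lt : c w < w := lt_of_le_of_ne hcw_le hne
      have hwv_lt : w < v := by
        rcases lt_or_eq_of_le hwv with h | h
        · exact h
        · exfalso; rw [h] at hcw_lt; exact absurd (hcv.trans hcw_lt) (lt_irrefl v)
      have hwt : w < c⁻¹ w := by
        have := (smono hmono (G.inv_mem hc)) hcw_lt
        simpa using this
      have hz : w < min (c⁻¹ w) v := lt_min hwt hwv_lt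
      obtain ⟨y, hy1, hy2⟩ := exists_between' hz
      have hyv : y ≤ v := hy2.le.trans (min_le_right _ _)
      have hyT : ¬ (c y ≤ y) := by
        intro hcy
        have : y ≤ w := hub y ⟨huw.trans hy1.le, hyv, hcy⟩
        exact absurd hy1 (not_lt.mpr this)
      have hycy : y < c y := lt_of_not_ge hyT
      have hcyw : c y < w := by
        have h7 : y < c⁻¹ w := hy2.trans_le (min_le_left _ _)
        have h8 := (smono hmono hc) h7
        simpa using h8
      exact absurd (hycy.trans hcyw) (not_lt.mpr hy1.le)

def Band (G : Subgroup (Equiv.Perm αI)) (p : αI × αI) : Prop :=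
  p.1 ≤ p.2 ∧ ∃ C : Set αI, (∀ a ∈ C, ∀ b ∈ C, Set.Icc a b ⊆ C) ∧
    (∀ g ∈ G, ∀ x ∈ C, g x ∈ C) ∧ C ⊆ supt G ∧ p.1 ∈ C ∧ p.2 ∈ C

lemma combine (hmono : ∀ g ∈ G, Monotone ⇑g) {c : Equiv.Perm αI} (hc : c ∈ G) :
    ∀ l : List (αI × αI), (∀ p ∈ l, p.1 ≤ p.2) →
    (∀ p ∈ l, ∃ k : ℕ, 1 ≤ k ∧ (p.2 < (c ^ k) p.1 ∨ (c ^ k) p.2 < p.1)) →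
    ∃ N : ℕ, 1 ≤ N ∧ ∀ p ∈ l, (p.2 < (c ^ N) p.1 ∨ (c ^ N) p.2 < p.1) := by
  intro l
  induction l with
  | nil => exact fun _ _ => ⟨1, le_refl 1, by simp⟩
  | cons p l ih =>
    intro hle hex
    obtain ⟨k, hk1, hkj⟩ := hex p List.mem_cons_self
    obtain ⟨N, hN1, hNj⟩ := ih (fun q hq => hle q (List.mem_cons_of_mem p hq))
      (fun q hq => hex q (List.mem_cons_of_mem p hq))
    refine ⟨k * N, Nat.one_le_iff_ne_zero.mpr (by positivity), ?_⟩
    intro q hq0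
    rcases List.mem_cons.mp hq0 with rfl | hq
    · -- q = p, use base c^k, exponent N
      rcases hkj with hup | hdown
      · left
        have := stab_up hmono (pow_mem hc k) (hle q hq0) hup N hN1
        rwa [← pow_mul] at this
      · right
        have := stab_down hmono (pow_mem hc k) (hle q hq0) hdown N hN1
        rwa [← pow_mul] at this
    · -- q ∈ l, use base c^N, exponent k
      rcases hNj q hq with hup | hdown
      · left
        have := stab_up hmono (pow_mem hc N) (hle q (List.mem_cons_of_mem p hq)) hup k hk1
        rwa [← pow_mul, Nat.mul_comm] at this
      · right
        have := stab_down hmono (pow_mem hc N) (hle q (List.mem_cons_of_mem p hq)) hdown k hk1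
        rwa [← pow_mul, Nat.mul_comm] at this


lemma jumper (hmono : ∀ g ∈ G, Monotone ⇑g) :
    ∀ (n : ℕ) (l : List (αI × αI)), l.length ≤ n → (∀ p ∈ l, Band G p) →
    ∃ g ∈ G, ∀ p ∈ l, (p.2 < g p.1 ∨ g p.2 < p.1) := by
  intro n
  induction n with
  | zero =>
    intro l hlen _
    have : l = [] := List.eq_nil_of_length_eq_zero (Nat.le_zero.mp hlen)
    subst this
    exact ⟨1, G.one_mem, by simp⟩
  | succ n ih =>
    intro l hlen hb
    match l with
    | [] => exact ⟨1, G.one_mem, by simp⟩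
    | p :: l =>
      obtain ⟨hpuv, C, hCconn, hCinv, hCsub, hCu, hCv⟩ := hb p List.mem_cons_self
      have hIcc : Set.Icc p.1 p.2 ⊆ supt G := fun z hz => hCsub (hCconn _ hCu _ hCv hz)
      obtain ⟨h, hhG, hh⟩ := escape hmono p.1 p.2 hpuv hIcc
      set F : αI × αI → αI × αI :=
        fun q => (min q.1 (h⁻¹ q.1), max q.2 (h⁻¹ q.2)) with hF
      have hbands' : ∀ q' ∈ l.map F, Band G q' := by
        intro q' hq'
        obtain ⟨q, hq, rfl⟩ := List.mem_map.mp hq'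
        obtain ⟨hquv, D, hDconn, hDinv, hDsub, hDu, hDv⟩ := hb q (List.mem_cons_of_mem p hq)
        refine ⟨?_, D, hDconn, hDinv, hDsub, ?_, ?_⟩
        · exact le_trans (min_le_left _ _) (le_trans hquv (le_max_left _ _))
        · rcases min_cases q.1 (h⁻¹ q.1) with ⟨he, _⟩ | ⟨he, _⟩ <;> rw [hF] <;> dsimp only <;> rw [he]
          · exact hDu
          · exact hDinv h⁻¹ (G.inv_mem hhG) _ hDu
        · rcases max_cases q.2 (h⁻¹ q.2) with ⟨he, _⟩ | ⟨he, _⟩ <;> rw [hF] <;> dsimp only <;> rw [he]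
          · exact hDv
          · exact hDinv h⁻¹ (G.inv_mem hhG) _ hDv
      obtain ⟨e, heG, hej⟩ := ih (l.map F)
        (by rw [List.length_map]; exact Nat.le_of_succ_le_succ hlen) hbands'
      -- pick f ∈ {e, e⁻¹} with p.1 ≤ f p.1
      obtain ⟨f, hfG, hf1, hfj⟩ :
          ∃ f ∈ G, p.1 ≤ f p.1 ∧ ∀ q ∈ l,
            (max q.2 (h⁻¹ q.2) < f (min q.1 (h⁻¹ q.1)) ∨
             f (max q.2 (h⁻¹ q.2)) < min q.1 (h⁻¹ q.1)) := by
        by_cases hcase : p.1 ≤ e p.1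
        · refine ⟨e, heG, hcase, ?_⟩
          intro q hq
          have := hej (F q) (List.mem_map.mpr ⟨q, hq, rfl⟩)
          rw [hF] at this; exact this
        · push_neg at hcase
          refine ⟨e⁻¹, G.inv_mem heG, ?_, ?_⟩
          · have := (smono hmono (G.inv_mem heG)) hcase
            simpa using this.le
          · intro q hq
            have hj := hej (F q) (List.mem_map.mpr ⟨q, hq, rfl⟩)
            rw [hF] at hj
            rcases hj with hup | hdown
            · right
              have := (smono hmono (G.inv_mem heG)) hup
              simpa using this
            · left
              have := (smono hmono (G.inv_mem heG)) hdown
              simpa using this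
      set c : Equiv.Perm αI := h * f with hcdef
      have hcG : c ∈ G := G.mul_mem hhG hfG
      have hhead : p.2 < c p.1 := by
        have h2 : h p.1 ≤ h (f p.1) := (hmono h hhG) hf1
        calc p.2 < h p.1 := hh
          _ ≤ h (f p.1) := h2
          _ = c p.1 := by rw [hcdef, Equiv.Perm.mul_apply]
      -- no fixed points of c on old bands
      have hnofix : ∀ q ∈ l, ∀ w, q.1 ≤ w → w ≤ q.2 → c w ≠ w := by
        intro q hq w hw1 hw2 hfix
        have hfw : f w = h⁻¹ w := by
          have : h (f w) = w := by rw [← Equiv.Perm.mul_apply, ← hcdef]; exact hfix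
          have := congrArg (⇑h⁻¹) this
          simpa using this
        rcases hfj q hq with hup | hdown
        · have hA : f (min q.1 (h⁻¹ q.1)) ≤ f w :=
            (hmono f hfG) (le_trans (min_le_left _ _) hw1)
          have hB : h⁻¹ w ≤ h⁻¹ q.2 := (hmono h⁻¹ (G.inv_mem hhG)) hw2
          have : f w < f w := by
            calc f w = h⁻¹ w := hfw
              _ ≤ h⁻¹ q.2 := hB
              _ ≤ max q.2 (h⁻¹ q.2) := le_max_right _ _
              _ < f (min q.1 (h⁻¹ q.1)) := hup
              _ ≤ f w := hA
          exact lt_irrefl _ this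
        · have hA : f w ≤ f (max q.2 (h⁻¹ q.2)) :=
            (hmono f hfG) (le_trans hw2 (le_max_left _ _))
          have hB : h⁻¹ q.1 ≤ h⁻¹ w := (hmono h⁻¹ (G.inv_mem hhG)) hw1
          have : f w < f w := by
            calc f w ≤ f (max q.2 (h⁻¹ q.2)) := hA
              _ < min q.1 (h⁻¹ q.1) := hdown
              _ ≤ h⁻¹ q.1 := min_le_right _ _
              _ ≤ h⁻¹ w := hB
              _ = f w := hfw.symm
          exact lt_irrefl _ this
      -- blocking contrapositive on old bands
      have hex : ∀ q ∈ l, ∃ k : ℕ, 1 ≤ k ∧ (q.2 < (c ^ k) q.1 ∨ (c ^ k) q.2 < q.1) := by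
        intro q hq
        by_contra hcon
        push_neg at hcon
        have hquv : q.1 ≤ q.2 := (hb q (List.mem_cons_of_mem p hq)).1
        obtain ⟨w, hw1, hw2, hwfix⟩ := blocking hmono hcG hquv
          (fun k hk => not_lt.mpr (hcon k hk).1) (fun k hk => not_lt.mpr (hcon k hk).2)
        exact hnofix q hq w hw1 hw2 hwfix
      obtain ⟨N, hN1, hNj⟩ := combine hmono hcG l
        (fun q hq => (hb q (List.mem_cons_of_mem p hq)).1) hex
      refine ⟨c ^ N, pow_mem hcG N, ?_⟩
      intro q hq0
      rcases List.mem_cons.mp hq0 with rfl | hq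
      · left; exact stab_up hmono hcG hpuv hhead N hN1
      · exact hNj q hq

lemma supt_open (hcont : ∀ g ∈ G, Continuous ⇑g) : IsOpen (supt G) := by
  have heq : supt G = ⋃ g : G, {z : αI | (g : Equiv.Perm αI) z ≠ z} := by
    ext z
    simp only [supt, mem_setOf_eq, mem_iUnion]
    constructor
    · rintro ⟨g, hg, hgz⟩; exact ⟨⟨g, hg⟩, hgz⟩
    · rintro ⟨⟨g, hg⟩, hgz⟩; exact ⟨g, hg, hgz⟩
  rw [heq]
  exact isOpen_iUnion (fun g => isOpen_ne_fun (hcont g g.2) continuous_id)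

lemma ball_conn (y : αI) (ε : ℝ) :
    ∀ a ∈ Metric.ball y ε, ∀ b ∈ Metric.ball y ε, Set.Icc a b ⊆ Metric.ball y ε := by
  intro a ha b hb z hz
  rw [Metric.mem_ball, Subtype.dist_eq, Real.dist_eq] at *
  have h1 := abs_lt.mp ha
  have h2 := abs_lt.mp hb
  have h3 : (a : ℝ) ≤ z := Subtype.coe_le_coe.mpr hz.1
  have h4 : (z : ℝ) ≤ b := Subtype.coe_le_coe.mpr hz.2
  exact abs_lt.mpr ⟨by linarith, by linarith⟩

lemma component (hmono : ∀ g ∈ G, Monotone ⇑g) (hcont : ∀ g ∈ G, Continuous ⇑g)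
    (x : αI) (hx : x ∈ supt G) :
    ∃ W : Set αI, x ∈ W ∧ IsOpen W ∧ W ⊆ supt G ∧
      (∀ a ∈ W, ∀ b ∈ W, Set.Icc a b ⊆ W) ∧
      (∀ g ∈ G, ∀ y ∈ W, g y ∈ W) ∧
      (∀ y, y ∈ closure W → y ∈ supt G → y ∈ W) := by
  have hopen := supt_open hcont
  set 𝒰 : Set (Set αI) :=
    {U | IsOpen U ∧ (∀ a ∈ U, ∀ b ∈ U, Set.Icc a b ⊆ U) ∧ x ∈ U ∧ U ⊆ supt G} with h𝒰
  set W := ⋃₀ 𝒰 with hWdef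
  obtain ⟨ε, hε, hball⟩ := Metric.isOpen_iff.mp hopen x hx
  have hU0 : Metric.ball x ε ∈ 𝒰 :=
    ⟨Metric.isOpen_ball, ball_conn x ε, Metric.mem_ball_self hε, hball⟩
  have hxW : x ∈ W := ⟨Metric.ball x ε, hU0, Metric.mem_ball_self hε⟩
  have hWopen : IsOpen W := isOpen_sUnion (fun U hU => hU.1)
  have hWsub : W ⊆ supt G := by rintro z ⟨U, hU, hz⟩; exact hU.2.2.2 hz
  have hWconn : ∀ a ∈ W, ∀ b ∈ W, Set.Icc a b ⊆ W := by
    rintro a ⟨U1, hU1, ha⟩ b ⟨U2, hU2, hb⟩ z hz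
    rcases le_total z x with hzx | hxz
    · exact ⟨U1, hU1, hU1.2.1 a ha x hU1.2.2.1 ⟨hz.1, hzx⟩⟩
    · exact ⟨U2, hU2, hU2.2.1 x hU2.2.2.1 b hb ⟨hxz, hz.2⟩⟩
  have habs : ∀ y, y ∈ closure W → y ∈ supt G → y ∈ W := by
    intro y hyc hys
    obtain ⟨δ, hδ, hballδ⟩ := Metric.isOpen_iff.mp hopen y hys
    obtain ⟨w, hwW, hwd⟩ := Metric.mem_closure_iff.mp hyc δ hδ
    have hwb : w ∈ Metric.ball y δ := by rwa [Metric.mem_ball, dist_comm]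
    have hU' : (W ∪ Metric.ball y δ) ∈ 𝒰 := by
      refine ⟨hWopen.union Metric.isOpen_ball, ?_, Or.inl hxW,
        union_subset hWsub hballδ⟩
      rintro a (haW | haB) b (hbW | hbB) z hz
      · exact Or.inl (hWconn a haW b hbW hz)
      · rcases le_total z w with hzw | hwz
        · exact Or.inl (hWconn a haW w hwW ⟨hz.1, hzw⟩)
        · exact Or.inr (ball_conn y δ w hwb b hbB ⟨hwz, hz.2⟩)
      · rcases le_total z w with hzw | hwz
        · exact Or.inr (ball_conn y δ a haB w hwb ⟨hz.1, hzw⟩)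
        · exact Or.inl (hWconn w hwW b hbW ⟨hwz, hz.2⟩)
      · exact Or.inr (ball_conn y δ a haB b hbB hz)
    have hsubW : Metric.ball y δ ⊆ W := fun z hz => ⟨_, hU', Or.inr hz⟩
    exact hsubW (Metric.mem_ball_self hδ)
  -- greatest lower bound of W is fixed by all of G
  obtain ⟨A, hAlb, hAgl⟩ := exists_inf W ⟨x, hxW⟩
  have hAclos : A ∈ closure W := by
    rw [Metric.mem_closure_iff]
    intro δ hδ
    by_contra hcon
    push_neg at hcon
    have hlow : ∀ w ∈ W, (A : ℝ) + δ ≤ (w : ℝ) := by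
      intro w hw
      have h1 := hcon w hw
      have h2 : (A : ℝ) ≤ w := Subtype.coe_le_coe.mpr (hAlb w hw)
      rw [Subtype.dist_eq, Real.dist_eq, abs_sub_comm, abs_of_nonneg (by linarith)] at h1
      linarith
    have hb1 : (0:ℝ) ≤ min ((A:ℝ) + δ) 1 := le_min (by have := A.2.1; linarith) zero_le_one
    have hb2 : min ((A:ℝ) + δ) 1 ≤ 1 := min_le_right _ _
    have hlb : ∀ w ∈ W, (⟨min ((A:ℝ) + δ) 1, hb1, hb2⟩ : αI) ≤ w := by
      intro w hw
      exact Subtype.coe_le_coe.mp (le_trans (min_le_left _ _) (hlow w hw))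
    have h5 : min ((A:ℝ) + δ) 1 ≤ (A:ℝ) := Subtype.coe_le_coe.mpr (hAgl _ hlb)
    have h6 := hlow x hxW
    rcases min_cases ((A:ℝ)+δ) 1 with ⟨he,_⟩|⟨he,_⟩ <;> rw [he] at h5 <;>
      linarith [x.2.2]
  have hAns : A ∉ supt G := by
    intro hAs
    have hAW : A ∈ W := habs A hAclos hAs
    obtain ⟨δ, hδ, hballδ⟩ := Metric.isOpen_iff.mp hWopen A hAW
    by_cases hA0 : (A:ℝ) = 0
    · -- A is the bottom point, fixed by everything
      obtain ⟨g, hg, hgA⟩ := hAs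
      have : A = a0 := Subtype.ext hA0
      rw [this] at hgA
      exact hgA (bot_fixed g (hmono g hg))
    · have hApos : 0 < (A:ℝ) := lt_of_le_of_ne A.2.1 (Ne.symm hA0)
      have hy0 : (0:ℝ) ≤ max 0 ((A:ℝ) - δ/2) := le_max_left _ _
      have hy1 : max 0 ((A:ℝ) - δ/2) ≤ 1 := by
        rcases max_cases (0:ℝ) ((A:ℝ) - δ/2) with ⟨he,_⟩|⟨he,_⟩ <;> rw [he]
        · exact zero_le_one
        · linarith [A.2.2]
      have hyA : max 0 ((A:ℝ) - δ/2) < (A:ℝ) := by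
        rcases max_cases (0:ℝ) ((A:ℝ) - δ/2) with ⟨he,_⟩|⟨he,_⟩ <;> rw [he] <;> linarith
      have h7 : (A:ℝ) - δ/2 ≤ max 0 ((A:ℝ) - δ/2) := le_max_right _ _
      have hyball : (⟨max 0 ((A:ℝ) - δ/2), hy0, hy1⟩ : αI) ∈ Metric.ball A δ := by
        rw [Metric.mem_ball, Subtype.dist_eq, Real.dist_eq]
        rw [abs_of_nonpos (by dsimp; linarith)]
        dsimp
        linarith
      have hyW := hballδ hyball
      have := hAlb _ hyW
      exact absurd (Subtype.coe_le_coe.mpr this) (not_le.mpr hyA)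
  have hAfix : ∀ g ∈ G, g A = A := by
    intro g hg
    by_contra hne
    exact hAns ⟨g, hg, hne⟩
  -- least upper bound, mirror
  obtain ⟨S, hSub, hSls⟩ := exists_sup W ⟨x, hxW⟩
  have hSclos : S ∈ closure W := by
    rw [Metric.mem_closure_iff]
    intro δ hδ
    by_contra hcon
    push_neg at hcon
    have hhigh : ∀ w ∈ W, (w : ℝ) ≤ (S : ℝ) - δ := by
      intro w hw
      have h1 := hcon w hw
      have h2 : (w : ℝ) ≤ S := Subtype.coe_le_coe.mpr (hSub w hw)
      rw [Subtype.dist_eq, Real.dist_eq, abs_of_nonneg (by linarith)] at h1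
      linarith
    have hb1 : (0:ℝ) ≤ max ((S:ℝ) - δ) 0 := le_max_right _ _
    have hb2 : max ((S:ℝ) - δ) 0 ≤ 1 := by
      rcases max_cases ((S:ℝ) - δ) 0 with ⟨he,_⟩|⟨he,_⟩ <;> rw [he] <;>
        [linarith [S.2.2]; exact zero_le_one]
    have hub' : ∀ w ∈ W, w ≤ (⟨max ((S:ℝ) - δ) 0, hb1, hb2⟩ : αI) := by
      intro w hw
      exact Subtype.coe_le_coe.mp (le_trans (hhigh w hw) (le_max_left _ _))
    have h5 : (S:ℝ) ≤ max ((S:ℝ) - δ) 0 := Subtype.coe_le_coe.mpr (hSls _ hub')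
    have h6 := hhigh x hxW
    rcases max_cases ((S:ℝ)-δ) 0 with ⟨he,_⟩|⟨he,_⟩ <;> rw [he] at h5 <;>
      linarith [x.2.1]
  have hSns : S ∉ supt G := by
    intro hSs
    have hSW : S ∈ W := habs S hSclos hSs
    obtain ⟨δ, hδ, hballδ⟩ := Metric.isOpen_iff.mp hWopen S hSW
    by_cases hS1 : (S:ℝ) = 1
    · obtain ⟨g, hg, hgS⟩ := hSs
      have : S = a1 := Subtype.ext hS1
      rw [this] at hgS
      exact hgS (top_fixed g (hmono g hg))
    · have hSlt : (S:ℝ) < 1 := lt_of_le_of_ne S.2.2 hS1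
      have hy1 : min 1 ((S:ℝ) + δ/2) ≤ 1 := min_le_left _ _
      have hy0 : (0:ℝ) ≤ min 1 ((S:ℝ) + δ/2) := by
        rcases min_cases (1:ℝ) ((S:ℝ) + δ/2) with ⟨he,_⟩|⟨he,_⟩ <;> rw [he]
        · exact zero_le_one
        · linarith [S.2.1]
      have hyS : (S:ℝ) < min 1 ((S:ℝ) + δ/2) := by
        rcases min_cases (1:ℝ) ((S:ℝ) + δ/2) with ⟨he,_⟩|⟨he,_⟩ <;> rw [he] <;> linarith
      have h7 : min 1 ((S:ℝ) + δ/2) ≤ (S:ℝ) + δ/2 := min_le_right _ _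
      have hyball : (⟨min 1 ((S:ℝ) + δ/2), hy0, hy1⟩ : αI) ∈ Metric.ball S δ := by
        rw [Metric.mem_ball, Subtype.dist_eq, Real.dist_eq]
        rw [abs_of_nonneg (by dsimp; linarith)]
        dsimp
        linarith
      have hyW := hballδ hyball
      have := hSub _ hyW
      exact absurd (Subtype.coe_le_coe.mpr this) (not_le.mpr hyS)
  have hSfix : ∀ g ∈ G, g S = S := by
    intro g hg
    by_contra hne
    exact hSns ⟨g, hg, hne⟩
  have hstrict : ∀ y ∈ W, A < y ∧ y < S := by
    intro y hy
    constructor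
    · refine lt_of_le_of_ne (hAlb y hy) ?_
      intro he
      exact hAns (he ▸ hWsub hy)
    · refine lt_of_le_of_ne (hSub y hy) ?_
      intro he
      exact hSns (he ▸ hWsub hy)
  have hIoo : ∀ z : αI, A < z → z < S → z ∈ W := by
    intro z h1 h2
    have hex1 : ∃ w1 ∈ W, w1 < z := by
      by_contra hcon
      push_neg at hcon
      exact absurd h1 (not_lt.mpr (hAgl z hcon))
    have hex2 : ∃ w2 ∈ W, z < w2 := by
      by_contra hcon
      push_neg at hcon
      exact absurd h2 (not_lt.mpr (hSls z hcon))
    obtain ⟨w1, hw1, hlt1⟩ := hex1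
    obtain ⟨w2, hw2, hlt2⟩ := hex2
    exact hWconn w1 hw1 w2 hw2 ⟨hlt1.le, hlt2.le⟩
  have hWinv : ∀ g ∈ G, ∀ y ∈ W, g y ∈ W := by
    intro g hg y hy
    obtain ⟨h1, h2⟩ := hstrict y hy
    have hsm := smono hmono hg
    refine hIoo (g y) ?_ ?_
    · calc A = g A := (hAfix g hg).symm
        _ < g y := hsm h1
    · calc g y < g S := hsm h2
        _ = S := hSfix g hg
  exact ⟨W, hxW, hWopen, hWsub, hWconn, hWinv, habs⟩


end Stmt0Proof

open Stmt0Proof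

/-- `supt` of a set of permutations of a space: the set of points moved by some element. -/
theorem stmt0
    (G : Subgroup (Equiv.Perm (Icc (0:ℝ) 1)))
    (hG : ∀ g ∈ G, Continuous (⇑(g : Equiv.Perm (Icc (0:ℝ) 1))) ∧ Monotone ⇑g)
    (X : Set (Icc (0:ℝ) 1))
    (hX : IsCompact X)
    (hXsupp : X ⊆ {x | ∃ g ∈ G, g x ≠ x}) :
    ∃ g ∈ G, ∀ k : ℤ, k ≠ 0 → (⇑(g ^ k) '' X) ∩ X = ∅ := by
  classical
  have hmono : ∀ g ∈ G, Monotone ⇑g := fun g hg => (hG g hg).2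
  have hcont : ∀ g ∈ G, Continuous ⇑g := fun g hg => (hG g hg).1
  have hsupp : X ⊆ supt G := hXsupp
  rcases X.eq_empty_or_nonempty with hXe | hXne
  · exact ⟨1, G.one_mem, fun k hk => by simp [hXe]⟩
  -- components
  have hcomp : ∀ i : X, ∃ W : Set αI, (i : αI) ∈ W ∧ IsOpen W ∧ W ⊆ supt G ∧
      (∀ a ∈ W, ∀ b ∈ W, Set.Icc a b ⊆ W) ∧
      (∀ g ∈ G, ∀ y ∈ W, g y ∈ W) ∧
      (∀ y, y ∈ closure W → y ∈ supt G → y ∈ W) :=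
    fun i => component hmono hcont i (hsupp i.2)
  choose W hWmem hWopen hWsub hWconn hWinv hWabs using hcomp
  obtain ⟨t, ht⟩ := hX.elim_finite_subcover W hWopen
    (fun z hz => mem_iUnion.mpr ⟨⟨z, hz⟩, hWmem _⟩)
  -- compactness of X ∩ W i, and extremal points
  have hXWeq : ∀ i : X, X ∩ W i = X ∩ closure (W i) := by
    intro i
    ext z
    constructor
    · rintro ⟨h1, h2⟩; exact ⟨h1, subset_closure h2⟩
    · rintro ⟨h1, h2⟩; exact ⟨h1, hWabs i z h2 (hsupp h1)⟩
  have hXWc : ∀ i : X, IsCompact (X ∩ W i) := by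
    intro i
    rw [hXWeq i]
    exact hX.inter_right isClosed_closure
  have hXWne : ∀ i : X, (X ∩ W i).Nonempty := fun i => ⟨i, i.2, hWmem i⟩
  have hUV : ∀ i : X, ∃ u v : αI, u ∈ X ∩ W i ∧ v ∈ X ∩ W i ∧
      ∀ z ∈ X ∩ W i, u ≤ z ∧ z ≤ v := by
    intro i
    have himc : IsCompact (Subtype.val '' (X ∩ W i)) :=
      (hXWc i).image continuous_subtype_val
    have himne : (Subtype.val '' (X ∩ W i)).Nonempty := (hXWne i).image _
    obtain ⟨m, hmmem, hmlb⟩ := himc.exists_isLeast himne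
    obtain ⟨M, hMmem, hMub⟩ := himc.exists_isGreatest himne
    obtain ⟨u, hu, hum⟩ := hmmem
    obtain ⟨v, hv, hvM⟩ := hMmem
    refine ⟨u, v, hu, hv, fun z hz => ⟨?_, ?_⟩⟩
    · exact Subtype.coe_le_coe.mp (hum ▸ hmlb ⟨z, hz, rfl⟩)
    · exact Subtype.coe_le_coe.mp (hvM ▸ hMub ⟨z, hz, rfl⟩)
  choose u v huXW hvXW huv using hUV
  -- the list of bands
  set l : List (αI × αI) := t.toList.map (fun i => (u i, v i)) with hl
  have hband : ∀ p ∈ l, Band G p := by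
    intro p hp
    obtain ⟨i, hit, rfl⟩ := List.mem_map.mp hp
    exact ⟨(huv i (v i) (hvXW i)).1, W i, hWconn i, hWinv i, hWsub i,
      (huXW i).2, (hvXW i).2⟩
  obtain ⟨g, hgG, hgj⟩ := jumper hmono l.length l (le_refl _) hband
  refine ⟨g, hgG, ?_⟩
  intro k hk
  rw [Set.eq_empty_iff_forall_notMem]
  rintro y ⟨⟨x0, hx0X, rfl⟩, hyX⟩
  obtain ⟨i, hit, hx0W⟩ := mem_iUnion₂.mp (ht hx0X)
  have hx0uv := huv i x0 ⟨hx0X, hx0W⟩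
  have hgkG : (g ^ k : Equiv.Perm αI) ∈ G := zpow_mem hgG k
  have hyW : ((g ^ k : Equiv.Perm αI)) x0 ∈ W i := hWinv i _ hgkG x0 hx0W
  have hyuv := huv i _ ⟨hyX, hyW⟩
  have hjump := hgj (u i, v i) (List.mem_map.mpr ⟨i, Finset.mem_toList.mpr hit, rfl⟩)
  simp only at hjump
  rcases hk.lt_or_gt with hneg | hpos
  · -- k < 0 : use base g⁻¹
    set m : ℕ := (-k).toNat with hm
    have hm1 : 1 ≤ m := by omega
    have hpow : (g ^ k : Equiv.Perm αI) = (g⁻¹) ^ m := by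
      have hke : k = -((m : ℤ)) := by omega
      rw [hke, zpow_neg, zpow_natCast, ← inv_pow]
    rcases hjump with hup | hdown
    · -- v i < g (u i) : so g⁻¹ (v i) < u i
      have hdown' : (g⁻¹ : Equiv.Perm αI) (v i) < u i := by
        have := (smono hmono (G.inv_mem hgG)) hup
        simpa using this
      have hst := stab_down hmono (G.inv_mem hgG) (huv i (v i) (hvXW i)).1 hdown' m hm1
      have hle : ((g ^ k : Equiv.Perm αI)) x0 ≤ ((g⁻¹ : Equiv.Perm αI) ^ m) (v i) := by
        rw [hpow]
        exact (hmono _ (pow_mem (G.inv_mem hgG) m)) hx0uv.2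
      exact absurd (hyuv.1) (not_le.mpr (lt_of_le_of_lt hle hst))
    · -- g (v i) < u i : so v i < g⁻¹ (u i)
      have hup' : v i < (g⁻¹ : Equiv.Perm αI) (u i) := by
        have := (smono hmono (G.inv_mem hgG)) hdown
        simpa using this
      have hst := stab_up hmono (G.inv_mem hgG) (huv i (v i) (hvXW i)).1 hup' m hm1
      have hle : ((g⁻¹ : Equiv.Perm αI) ^ m) (u i) ≤ ((g ^ k : Equiv.Perm αI)) x0 := by
        rw [hpow]
        exact (hmono _ (pow_mem (G.inv_mem hgG) m)) hx0uv.1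
      exact absurd (hyuv.2) (not_le.mpr (lt_of_lt_of_le hst hle))
  · -- k > 0
    set n : ℕ := k.toNat with hn
    have hn1 : 1 ≤ n := by omega
    have hpow : (g ^ k : Equiv.Perm αI) = g ^ n := by
      have : ((n : ℤ)) = k := by omega
      rw [← zpow_natCast, this]
    rcases hjump with hup | hdown
    · have hst := stab_up hmono hgG (huv i (v i) (hvXW i)).1 hup n hn1
      have hle : (g ^ n : Equiv.Perm αI) (u i) ≤ ((g ^ k : Equiv.Perm αI)) x0 := by
        rw [hpow]
        exact (hmono _ (pow_mem hgG n)) hx0uv.1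
      exact absurd (hyuv.2) (not_le.mpr (lt_of_lt_of_le hst hle))
    · have hst := stab_down hmono hgG (huv i (v i) (hvXW i)).1 hdown n hn1
      have hle : ((g ^ k : Equiv.Perm αI)) x0 ≤ (g ^ n : Equiv.Perm αI) (v i) := by
        rw [hpow]
        exact (hmono _ (pow_mem hgG n)) hx0uv.2
      exact absurd (hyuv.1) (not_le.mpr (lt_of_le_of_lt hle hst))
end

section
/- Let A and B be subgroups of the group of orientation-preserving homeomorphisms of [0,1] such that for every a ∈ A the closure of supt(a) is contained in supt B. Then the commutator subgroup A' is contained in the subgroup generated by all commutators [[a₀,b₀],[a₁,b₁]] with a₀,a₁ ∈ A and b₀,b₁ ∈ B. (One may use the auxiliary fact that a compact subset of supt B can be moved off itself by an element of B.) -/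
open Set Filter Topology
open scoped commutatorElement

private abbrev XX := ↥(Icc (0:ℝ) 1)

noncomputable instance : CompactSpace XX := isCompact_iff_compactSpace.mp isCompact_Icc

lemma machine (B : Subgroup (Equiv.Perm XX))
    (hB : ∀ g ∈ B, Continuous (⇑(g : Equiv.Perm XX)) ∧ Monotone ⇑g)
    (s : ℕ → XX) :
    ∃ (e : ℕ → XX) (bk : ℕ → Equiv.Perm XX),
      (∀ b ∈ B, ∀ n, b (e n) = e n) ∧ (∀ k, bk k ∈ B) ∧
      (∀ n, Tendsto (fun k => bk k (s n)) atTop (𝓝 (e n))) := by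
  classical
  set Orb : Set (ℕ → XX) := {f | ∃ b ∈ B, f = fun n => b (s n)} with hOrb
  let E : ℕ → Set (ℕ → XX) := fun n =>
    Nat.rec (closure Orb) (fun n En => {e | e ∈ En ∧ ∀ e' ∈ En, ((e' n : ℝ)) ≤ (e n : ℝ)}) n
  have hEsucc : ∀ n, E (n+1) = {e | e ∈ E n ∧ ∀ e' ∈ E n, ((e' n : ℝ)) ≤ ((e n : ℝ))} :=
    fun n => rfl
  have hmono : ∀ n, E (n+1) ⊆ E n := fun n e he => he.1
  have hclosed : ∀ n, IsClosed (E n) := by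
    intro n; induction n with
    | zero => exact isClosed_closure
    | succ n ih =>
      rw [hEsucc]
      have heq : {e : ℕ → XX | e ∈ E n ∧ ∀ e' ∈ E n, ((e' n:ℝ)) ≤ (e n:ℝ)} =
          E n ∩ ⋂ (e' : ℕ → XX) (_ : e' ∈ E n), {e | ((e' n:ℝ)) ≤ (e n:ℝ)} := by
        ext e; simp only [Set.mem_setOf_eq, Set.mem_inter_iff, Set.mem_iInter]
      rw [heq]
      exact ih.inter (isClosed_iInter fun e' => isClosed_iInter fun _ =>
        isClosed_le continuous_const ((continuous_subtype_val).comp (continuous_apply n)))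
  have hne : ∀ n, (E n).Nonempty := by
    intro n; induction n with
    | zero =>
      refine ⟨fun n => s n, subset_closure ⟨1, B.one_mem, ?_⟩⟩
      funext m; simp
    | succ n ih =>
      obtain ⟨e₀, he₀, hm⟩ := (hclosed n).isCompact.exists_isMaxOn ih
        (((continuous_subtype_val).comp (continuous_apply n)).continuousOn
          (f := fun e : ℕ → XX => (e n : ℝ)))
      exact ⟨e₀, (hEsucc n) ▸ ⟨he₀, fun e' he' => hm he'⟩⟩
  obtain ⟨e, he⟩ := IsCompact.nonempty_iInter_of_sequence_nonempty_isCompact_isClosed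
    E hmono hne (hclosed 0).isCompact hclosed
  have heE : ∀ n, e ∈ E n := by
    intro n; exact Set.mem_iInter.mp he n
  have hmax : ∀ n, ∀ e' ∈ E n, ((e' n : ℝ)) ≤ (e n : ℝ) := fun n => (heE (n+1)).2
  have claim1 : ∀ n, ∀ g : Equiv.Perm XX, g ∈ B → (∀ m, m < n → g (e m) = e m) →
      (fun m => g (e m)) ∈ E n := by
    intro n; induction n with
    | zero =>
      intro g hg _
      have hcont : Continuous (fun f : ℕ → XX => fun m => g (f m)) :=
        continuous_pi fun m => (hB g hg).1.comp (continuous_apply m)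
      have himg : (fun f : ℕ → XX => fun m => g (f m)) '' Orb ⊆ Orb := by
        rintro _ ⟨f, ⟨b, hb, rfl⟩, rfl⟩
        exact ⟨g * b, B.mul_mem hg hb, by funext m; simp [Equiv.Perm.mul_apply]⟩
      have hmem : (fun m => g (e m)) ∈ (fun f : ℕ → XX => fun m => g (f m)) '' closure Orb :=
        ⟨e, heE 0, rfl⟩
      have h2 := (image_closure_subset_closure_image hcont) hmem
      exact closure_mono himg h2
    | succ n ih =>
      intro g hg hfix
      rw [hEsucc]
      refine ⟨ih g hg (fun m hm => hfix m (hm.trans (Nat.lt_succ_self n))), ?_⟩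
      intro e' he'
      show ((e' n:ℝ)) ≤ ((g (e n)):ℝ)
      rw [hfix n (Nat.lt_succ_self n)]
      exact hmax n e' he'
  have claim2 : ∀ n, ∀ b ∈ B, b (e n) = e n := by
    intro n
    induction n using Nat.strong_induction_on with
    | _ n ih =>
      intro b hb
      have h1 : (fun m => b (e m)) ∈ E n := claim1 n b hb (fun m hm => ih m hm b hb)
      have h2 : (fun m => b⁻¹ (e m)) ∈ E n := by
        refine claim1 n b⁻¹ (B.inv_mem hb) (fun m hm => ?_)
        have h := ih m hm b hb
        calc b⁻¹ (e m) = b⁻¹ (b (e m)) := by rw [h]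
          _ = e m := b.symm_apply_apply _
      have hle1 : b (e n) ≤ e n := Subtype.coe_le_coe.mp (hmax n _ h1)
      have hle2 : b⁻¹ (e n) ≤ e n := Subtype.coe_le_coe.mp (hmax n _ h2)
      have hge : e n ≤ b (e n) := by
        have := (hB b hb).2 hle2
        simpa using this
      exact le_antisymm hle1 hge
  obtain ⟨f, hfOrb, hft⟩ := mem_closure_iff_seq_limit.mp (heE 0)
  choose bk hbk hbkeq using hfOrb
  refine ⟨e, bk, fun b hb n => claim2 n b hb, hbk, ?_⟩
  intro n
  have h := (tendsto_pi_nhds.mp hft) n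
  have : (fun k => bk k (s n)) = fun k => f k n := by
    funext k; rw [hbkeq k]
  rw [this]; exact h

lemma perm_fix_bot (g : Equiv.Perm XX) (hg : Monotone ⇑g) (z : XX) (hz : ∀ w : XX, z ≤ w) :
    g z = z := by
  have h1 : g z ≤ g (g⁻¹ z) := hg (hz _)
  rw [Equiv.Perm.inv_def, Equiv.apply_symm_apply] at h1
  exact le_antisymm h1 (hz _)

lemma perm_fix_top (g : Equiv.Perm XX) (hg : Monotone ⇑g) (z : XX) (hz : ∀ w : XX, w ≤ z) :
    g z = z := by
  have h1 : g (g⁻¹ z) ≤ g z := hg (hz _)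
  rw [Equiv.Perm.inv_def, Equiv.apply_symm_apply] at h1
  exact le_antisymm (hz _) h1

lemma exists_seq_in_Ioo (s : ℕ → XX) (hs : DenseRange s) (a b : ℝ) (hab : a < b)
    (ha : 0 ≤ a) (hb : b ≤ 1) : ∃ n, a < ((s n : XX):ℝ) ∧ ((s n : XX):ℝ) < b := by
  have hne : (Subtype.val ⁻¹' (Ioo a b) : Set XX).Nonempty := by
    refine ⟨⟨(a+b)/2, ⟨by linarith, by linarith⟩⟩, ⟨?_, ?_⟩⟩
    · show a < (a+b)/2
      linarith
    · show (a+b)/2 < b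
      linarith
  obtain ⟨n, hn⟩ := hs.exists_mem_open (isOpen_Ioo.preimage continuous_subtype_val) hne
  exact ⟨n, hn.1, hn.2⟩

lemma displace (B : Subgroup (Equiv.Perm XX))
    (hB : ∀ g ∈ B, Continuous (⇑(g : Equiv.Perm XX)) ∧ Monotone ⇑g)
    (K : Set XX) (hKc : IsClosed K)
    (hK : ∀ x ∈ K, ∃ b ∈ B, b x ≠ x) :
    ∃ b ∈ B, ∀ x ∈ K, b x ∉ K := by
  classical
  set F : Set XX := {x | ∀ b ∈ B, b x = x} with hF
  have hFc : IsClosed F := by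
    have : F = ⋂ (b : Equiv.Perm XX) (_ : b ∈ B), {x | b x = x} := by
      ext x; simp [hF, Set.mem_iInter]
    rw [this]
    exact isClosed_iInter fun b => isClosed_iInter fun hb =>
      isClosed_eq (hB b hb).1 continuous_id
  have hz0 : (⟨0, by norm_num⟩ : XX) ∈ F := fun b hb =>
    perm_fix_bot b (hB b hb).2 _ (fun w => Subtype.mk_le_mk.mpr w.2.1)
  have hz1 : (⟨1, by norm_num⟩ : XX) ∈ F := fun b hb =>
    perm_fix_top b (hB b hb).2 _ (fun w => Subtype.mk_le_mk.mpr w.2.2)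
  set Fv : Set ℝ := Subtype.val '' F with hFv
  have hFvcpt : IsCompact Fv := (hFc.isCompact).image continuous_subtype_val
  have h0Fv : (0:ℝ) ∈ Fv := ⟨_, hz0, rfl⟩
  have h1Fv : (1:ℝ) ∈ Fv := ⟨_, hz1, rfl⟩
  set u : XX → ℝ := fun x => sSup (Fv ∩ Iic ↑x) with hu
  set v : XX → ℝ := fun x => sInf (Fv ∩ Ici ↑x) with hv
  have hucpt : ∀ x : XX, IsCompact (Fv ∩ Iic ↑x) := fun x => hFvcpt.inter_right isClosed_Iic
  have hvcpt : ∀ x : XX, IsCompact (Fv ∩ Ici ↑x) := fun x => hFvcpt.inter_right isClosed_Ici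
  have hune : ∀ x : XX, (Fv ∩ Iic ↑x).Nonempty := fun x => ⟨0, h0Fv, x.2.1⟩
  have hvne : ∀ x : XX, (Fv ∩ Ici ↑x).Nonempty := fun x => ⟨1, h1Fv, x.2.2⟩
  have humem : ∀ x : XX, u x ∈ Fv ∩ Iic ↑x := fun x => (hucpt x).sSup_mem (hune x)
  have hvmem : ∀ x : XX, v x ∈ Fv ∩ Ici ↑x := fun x => (hvcpt x).sInf_mem (hvne x)
  have hnotFv : ∀ x : XX, x ∉ F → ↑x ∉ Fv := by
    rintro x hx ⟨y, hyF, hyv⟩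
    exact hx (by rwa [show y = x from Subtype.ext hyv] at hyF)
  have hult : ∀ x : XX, x ∉ F → u x < (x:ℝ) :=
    fun x hx => lt_of_le_of_ne (humem x).2 (fun h => hnotFv x hx (h ▸ (humem x).1))
  have hvgt : ∀ x : XX, x ∉ F → (x:ℝ) < v x :=
    fun x hx => lt_of_le_of_ne (hvmem x).2 (fun h => hnotFv x hx (h ▸ (hvmem x).1))
  have hgap : ∀ (x : XX), ∀ r ∈ Fv, ¬(u x < r ∧ r < v x) := by
    rintro x r hr ⟨h1, h2⟩
    rcases le_or_gt r ↑x with h | h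
    · exact absurd (le_csSup (hucpt x).bddAbove ⟨hr, h⟩) (not_le.mpr h1)
    · exact absurd (csInf_le (hvcpt x).bddBelow ⟨hr, h.le⟩) (not_le.mpr h2)
  have hinv : ∀ b ∈ B, ∀ (x y : XX), u x < ↑y → ↑y < v x →
      u x < ((b y : XX) : ℝ) ∧ ((b y : XX) : ℝ) < v x := by
    intro b hb x y h1 h2
    obtain ⟨U, hUF, hUv⟩ := (humem x).1
    obtain ⟨V, hVF, hVv⟩ := (hvmem x).1
    have hsm : StrictMono ⇑b := (hB b hb).2.strictMono_of_injective b.injective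
    constructor
    · have : U < y := by rw [← Subtype.coe_lt_coe, hUv]; exact h1
      have := hsm this
      rw [hUF b hb] at this
      calc u x = ↑U := hUv.symm
        _ < ↑(b y) := Subtype.coe_lt_coe.mpr this
    · have : y < V := by rw [← Subtype.coe_lt_coe, hVv]; exact h2
      have := hsm this
      rw [hVF b hb] at this
      calc ((b y : XX):ℝ) < ↑V := Subtype.coe_lt_coe.mpr this
        _ = v x := hVv
  -- component congruence
  have hcompeq : ∀ (x y : XX), y ∉ F → u x < ↑y → ↑y < v x → u y = u x ∧ v y = v x := by
    intro x y hyF h1 h2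
    constructor
    · apply le_antisymm
      · have hm : u y ∈ Fv := (humem y).1
        have hle : u y ≤ (y:ℝ) := (humem y).2
        have := hgap x (u y) hm
        push_neg at this
        rcases le_or_gt (u y) (u x) with h | h
        · exact h
        · exact absurd (this h) (not_le.mpr (lt_of_le_of_lt hle h2))
      · exact le_csSup (hucpt y).bddAbove ⟨(humem x).1, h1.le⟩
    · apply le_antisymm
      · exact csInf_le (hvcpt y).bddBelow ⟨(hvmem x).1, h2.le⟩
      · have hm : v y ∈ Fv := (hvmem y).1
        have hle : (y:ℝ) ≤ v y := (hvmem y).2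
        have := hgap x (v y) hm
        push_neg at this
        rcases le_or_gt (v y) (u x) with h | h
        · exact absurd h (not_le.mpr (lt_of_lt_of_le h1 hle))
        · exact this h
  have hKF : ∀ x ∈ K, x ∉ F := by
    intro x hx hxF
    obtain ⟨b, hb, hbx⟩ := hK x hx
    exact hbx (hxF b hb)
  -- dense sequence and machine #1
  obtain ⟨s, hs⟩ := TopologicalSpace.exists_dense_seq XX
  obtain ⟨e, bk, hefix, hbkB, hbkt⟩ := machine B hB s
  have heF : ∀ n, e n ∈ F := fun n b hb => hefix b hb n
  have hbktv : ∀ n, Tendsto (fun k => ((bk k (s n) : XX):ℝ)) atTop (𝓝 ↑(e n)) :=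
    fun n => (continuous_subtype_val.tendsto _).comp (hbkt n)
  have hemono : ∀ n m, (s n : ℝ) ≤ (s m : ℝ) → ((e n : XX):ℝ) ≤ ↑(e m) := by
    intro n m hnm
    refine le_of_tendsto_of_tendsto' (hbktv n) (hbktv m) (fun k => ?_)
    exact Subtype.coe_le_coe.mpr ((hB _ (hbkB k)).2 (Subtype.coe_le_coe.mp hnm))
  have hlabel : ∀ (x : XX), x ∉ F → ∀ n, u x < ↑(s n) → ↑(s n) < v x →
      (((e n : XX):ℝ) = u x ∨ ((e n : XX):ℝ) = v x) := by
    intro x hxF n h1 h2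
    have hbd : ∀ k, u x < ((bk k (s n) : XX):ℝ) ∧ ((bk k (s n) : XX):ℝ) < v x :=
      fun k => hinv (bk k) (hbkB k) x (s n) h1 h2
    have hge : u x ≤ ↑(e n) :=
      le_of_tendsto_of_tendsto' tendsto_const_nhds (hbktv n) (fun k => (hbd k).1.le)
    have hle : ((e n : XX):ℝ) ≤ v x :=
      le_of_tendsto_of_tendsto' (hbktv n) tendsto_const_nhds (fun k => (hbd k).2.le)
    have hFvmem : ((e n : XX):ℝ) ∈ Fv := ⟨e n, heF n, rfl⟩
    have := hgap x _ hFvmem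
    push_neg at this
    rcases eq_or_lt_of_le hge with h | h
    · exact Or.inl h.symm
    · exact Or.inr (le_antisymm hle (this h))
  have hFv01 : ∀ r ∈ Fv, 0 ≤ r ∧ r ≤ 1 := by
    rintro r ⟨w, _, rfl⟩
    exact ⟨w.2.1, w.2.2⟩
  -- cover by components
  set SS : XX → Set XX := fun x => Subtype.val ⁻¹' (Ioo (u x) (v x)) with hSS
  have hSSopen : ∀ x, IsOpen (SS x) := fun x => isOpen_Ioo.preimage continuous_subtype_val
  have hcover : K ⊆ ⋃ (i : K), SS ↑i := by
    intro x hx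
    exact Set.mem_iUnion.mpr ⟨⟨x, hx⟩, ⟨hult x (hKF x hx), hvgt x (hKF x hx)⟩⟩
  obtain ⟨t, ht⟩ := hKc.isCompact.elim_finite_subcover (fun i : K => SS ↑i)
    (fun i => hSSopen _) hcover
  -- p, q : extremes of K within a component
  set Kc : XX → Set ℝ := fun x => Subtype.val '' (K ∩ Subtype.val ⁻¹' (Icc (u x) (v x)))
    with hKcdef
  have hKccpt : ∀ x, IsCompact (Kc x) := fun x =>
    ((hKc.inter (isClosed_Icc.preimage continuous_subtype_val)).isCompact).image
      continuous_subtype_val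
  have hKcne : ∀ x : XX, x ∈ K → (Kc x).Nonempty := fun x hx =>
    ⟨↑x, ⟨x, ⟨hx, ⟨(hult x (hKF x hx)).le, (hvgt x (hKF x hx)).le⟩⟩, rfl⟩⟩
  set p : XX → ℝ := fun x => sInf (Kc x) with hp
  set q : XX → ℝ := fun x => sSup (Kc x) with hq
  have hpmem : ∀ x ∈ K, p x ∈ Kc x := fun x hx => (hKccpt x).sInf_mem (hKcne x hx)
  have hqmem : ∀ x ∈ K, q x ∈ Kc x := fun x hx => (hKccpt x).sSup_mem (hKcne x hx)
  have hKcF : ∀ (x : XX), ∀ r ∈ Kc x, u x < r ∧ r < v x := by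
    rintro x r ⟨z, ⟨hzK, hz1, hz2⟩, rfl⟩
    have hzFv : (z:ℝ) ∉ Fv := hnotFv z (hKF z hzK)
    constructor
    · exact lt_of_le_of_ne hz1 (fun h => hzFv (h ▸ (humem x).1))
    · exact lt_of_le_of_ne hz2 (fun h => hzFv (h.symm ▸ (hvmem x).1))
  have hbound : ∀ (x : XX), ∀ y ∈ K, u x < ↑y → ↑y < v x → p x ≤ ↑y ∧ (y:ℝ) ≤ q x := by
    intro x y hy h1 h2
    have hmem : (y:ℝ) ∈ Kc x := ⟨y, ⟨hy, h1.le, h2.le⟩, rfl⟩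
    exact ⟨csInf_le (hKccpt x).bddBelow hmem, le_csSup (hKccpt x).bddAbove hmem⟩
  -- threshold
  set LabU : XX → Set ℝ := fun x => {u x} ∪ {r | ∃ n, r = ((s n : XX):ℝ) ∧ u x < ↑(s n) ∧
    ((s n : XX):ℝ) < v x ∧ ((e n : XX):ℝ) = u x} with hLabU
  have huvlt : ∀ x : XX, x ∉ F → u x < v x := fun x hx => lt_trans (hult x hx) (hvgt x hx)
  have hLabBdd : ∀ x : XX, x ∉ F → BddAbove (LabU x) := by
    intro x hxF
    refine ⟨v x, ?_⟩
    rintro r (rfl | ⟨n, rfl, h1, h2, h3⟩)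
    · exact (huvlt x hxF).le
    · exact h2.le
  set th : XX → ℝ := fun x => sSup (LabU x) with hth
  have hthge : ∀ x : XX, x ∉ F → u x ≤ th x := fun x hxF =>
    le_csSup (hLabBdd x hxF) (Or.inl rfl)
  have hthle : ∀ x : XX, x ∉ F → th x ≤ v x := by
    intro x hxF
    refine csSup_le ⟨u x, Or.inl rfl⟩ ?_
    rintro r (rfl | ⟨n, rfl, h1, h2, h3⟩)
    · exact (huvlt x hxF).le
    · exact h2.le
  have hlabu : ∀ x : XX, x ∉ F → ∀ n, u x < ↑(s n) → ((s n : XX):ℝ) < v x →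
      ((s n : XX):ℝ) < th x → ((e n : XX):ℝ) = u x := by
    intro x hxF n h1 h2 h3
    obtain ⟨r, hr, hlt⟩ := exists_lt_of_lt_csSup ⟨u x, Or.inl rfl⟩ h3
    rcases hr with rfl | ⟨m, rfl, hm1, hm2, hm3⟩
    · exact absurd hlt (not_lt.mpr h1.le)
    · have hnm := hemono n m hlt.le
      rcases hlabel x hxF n h1 h2 with h | h
      · exact h
      · exfalso
        rw [h, hm3] at hnm
        exact absurd hnm (not_le.mpr (huvlt x hxF))
  have hlabv : ∀ x : XX, x ∉ F → ∀ n, u x < ↑(s n) → ((s n : XX):ℝ) < v x →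
      th x < ↑(s n) → ((e n : XX):ℝ) = v x := by
    intro x hxF n h1 h2 h3
    rcases hlabel x hxF n h1 h2 with h | h
    · exfalso
      exact absurd (le_csSup (hLabBdd x hxF) (Or.inr ⟨n, rfl, h1, h2, h⟩)) (not_le.mpr h3)
    · exact h
  have hthmem : ∀ x : XX, x ∉ F → th x ∈ Icc (0:ℝ) 1 := by
    intro x hxF
    constructor
    · exact le_trans (hFv01 _ (humem x).1).1 (hthge x hxF)
    · exact le_trans (hthle x hxF) (hFv01 _ (hvmem x).1).2
  set T : XX → XX := fun x => if hx : x ∉ F then (⟨th x, hthmem x hx⟩ : XX) else x with hT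
  have hTval : ∀ x : XX, x ∉ F → ((T x : XX):ℝ) = th x := by
    intro x hxF; simp only [hT, dif_pos hxF]
  -- machine #2
  set l := t.toList with hl
  set s2 : ℕ → XX := fun n => match l[n]? with
    | some i => T ↑i
    | none => (⟨0, by norm_num⟩ : XX) with hs2
  have hs2i : ∀ i ∈ t, ∃ n, s2 n = T ↑i := by
    intro i hit
    obtain ⟨n, hn⟩ := List.mem_iff_getElem?.mp (Finset.mem_toList.mpr hit)
    exact ⟨n, by simp only [hs2, hl, hn]⟩
  obtain ⟨e2, ck, he2fix, hckB, hckt⟩ := machine B hB s2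
  have he2F : ∀ n, e2 n ∈ F := fun n b hb => he2fix b hb n
  have hcktv : ∀ n, Tendsto (fun k => ((ck k (s2 n) : XX):ℝ)) atTop (𝓝 ↑(e2 n)) :=
    fun n => (continuous_subtype_val.tendsto _).comp (hckt n)
  -- choose L such that δ = ck L moves all thresholds out of the hulls
  have hev : ∀ i ∈ t, ∀ᶠ k in atTop, ((ck k (T ↑i) : XX):ℝ) ∉ Icc (p ↑i) (q ↑i) := by
    intro i hit
    have hxK : (↑i : XX) ∈ K := i.2
    set x : XX := ↑i
    have hxF : x ∉ F := hKF x hxK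
    have hup : u x < p x := (hKcF x _ (hpmem x hxK)).1
    have hqv : q x < v x := (hKcF x _ (hqmem x hxK)).2
    obtain ⟨n, hn⟩ := hs2i i hit
    rcases eq_or_lt_of_le (hthge x hxF) with hthu | hthu
    · -- th x = u x : T x is a fixed point
      have hTF : T x ∈ F := by
        obtain ⟨U, hUF, hUv⟩ := (humem x).1
        have hTU : T x = U := Subtype.ext (by rw [hTval x hxF, ← hthu, hUv])
        rw [hTU]; exact hUF
      refine Filter.Eventually.of_forall (fun k => ?_)
      rw [hTF (ck k) (hckB k), hTval x hxF, ← hthu]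
      exact fun hc => absurd hc.1 (not_le.mpr hup)
    · rcases eq_or_lt_of_le (hthle x hxF) with hthv | hthv
      · -- th x = v x
        have hTF : T x ∈ F := by
          obtain ⟨V, hVF, hVv⟩ := (hvmem x).1
          have hTV : T x = V := Subtype.ext (by rw [hTval x hxF, hthv, hVv])
          rw [hTV]; exact hVF
        refine Filter.Eventually.of_forall (fun k => ?_)
        rw [hTF (ck k) (hckB k), hTval x hxF, hthv]
        exact fun hc => absurd hc.2 (not_le.mpr hqv)
      · -- interior threshold
        have hu1 : u x < ((T x : XX):ℝ) := by rw [hTval x hxF]; exact hthu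
        have hv1 : ((T x : XX):ℝ) < v x := by rw [hTval x hxF]; exact hthv
        have hbd : ∀ k, u x < ((ck k (T x) : XX):ℝ) ∧ ((ck k (T x) : XX):ℝ) < v x :=
          fun k => hinv (ck k) (hckB k) x (T x) hu1 hv1
        have htt : Tendsto (fun k => ((ck k (T x) : XX):ℝ)) atTop (𝓝 ↑(e2 n)) := by
          have := hcktv n
          rw [hn] at this
          exact this
        have hge : u x ≤ ↑(e2 n) :=
          le_of_tendsto_of_tendsto' tendsto_const_nhds htt (fun k => (hbd k).1.le)
        have hle : ((e2 n : XX):ℝ) ≤ v x :=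
          le_of_tendsto_of_tendsto' htt tendsto_const_nhds (fun k => (hbd k).2.le)
        have hFvm : ((e2 n : XX):ℝ) ∈ Fv := ⟨e2 n, he2F n, rfl⟩
        have hng := hgap x _ hFvm
        push_neg at hng
        rcases eq_or_lt_of_le hge with h | h
        · -- e2 n = u x : eventually below p x
          have : ∀ᶠ k in atTop, ((ck k (T x) : XX):ℝ) < p x := by
            apply htt.eventually_lt_const
            rw [← h]; exact hup
          exact this.mono (fun k hk hc => absurd hc.1 (not_le.mpr hk))
        · have hev2 : ((e2 n : XX):ℝ) = v x := le_antisymm hle (hng h)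
          have : ∀ᶠ k in atTop, q x < ((ck k (T x) : XX):ℝ) := by
            apply htt.eventually_const_lt
            rw [hev2]; exact hqv
          exact this.mono (fun k hk hc => absurd hc.2 (not_le.mpr hk))
  have hevall : ∀ᶠ k in atTop, ∀ i ∈ t, ((ck k (T ↑i) : XX):ℝ) ∉ Icc (p ↑i) (q ↑i) :=
    (Filter.eventually_all_finset t).mpr hev
  obtain ⟨L, hL⟩ := hevall.exists
  set δ : Equiv.Perm XX := ck L with hδdef
  have hδB : δ ∈ B := hckB L
  have hδiB : δ⁻¹ ∈ B := B.inv_mem hδB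
  -- per-component displacement
  have hper : ∀ i : {x // x ∈ K}, ∃ N, ∀ k, N ≤ k → i ∈ t → ∀ x ∈ K,
      u ↑i < (x:ℝ) → (x:ℝ) < v ↑i → (bk k) (δ⁻¹ x) ∉ K := by
    intro i
    by_cases hit : i ∈ t
    swap
    · exact ⟨0, fun k _ hit' => absurd hit' hit⟩
    set ci : XX := ↑i with hci
    have hciK : ci ∈ K := i.2
    have hciF : ci ∉ F := hKF ci hciK
    have hup : u ci < p ci := (hKcF ci _ (hpmem ci hciK)).1
    have hqv : q ci < v ci := (hKcF ci _ (hqmem ci hciK)).2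
    have hpq : p ci ≤ (ci:ℝ) ∧ (ci:ℝ) ≤ q ci :=
      hbound ci ci hciK (hult ci hciF) (hvgt ci hciF)
    have hnotK : ∀ y : XX, u ci < ↑y → (y:ℝ) < v ci → ((y:ℝ) < p ci ∨ q ci < (y:ℝ)) →
        y ∉ K := by
      intro y h1 h2 h3 hyK
      have := hbound ci y hyK h1 h2
      rcases h3 with h | h
      exacts [absurd this.1 (not_le.mpr h), absurd this.2 (not_le.mpr h)]
    have hmbk : ∀ k, Monotone ⇑(bk k) := fun k => (hB _ (hbkB k)).2
    have hmδi : Monotone ⇑(δ⁻¹) := (hB _ hδiB).2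
    rcases eq_or_lt_of_le (hthge ci hciF) with hthu | hthu
    · -- CASE A : threshold = u, push everything up
      obtain ⟨Zp, hZpm, hZpv⟩ := hpmem ci hciK
      have hW := hinv δ⁻¹ hδiB ci Zp (by rw [hZpv]; exact hup)
        (by rw [hZpv]; exact lt_of_le_of_lt (hpq.1.trans hpq.2) hqv)
      obtain ⟨n₀, hn₀1, hn₀2⟩ := exists_seq_in_Ioo s hs (u ci) ↑(δ⁻¹ Zp) hW.1
        (hFv01 _ (humem ci).1).1 (δ⁻¹ Zp).2.2
      have hlab : ((e n₀ : XX):ℝ) = v ci := hlabv ci hciF n₀ hn₀1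
        (lt_trans hn₀2 hW.2) (by rw [← hthu]; exact hn₀1)
      have hevq : ∀ᶠ k in atTop, q ci < ((bk k (s n₀) : XX):ℝ) :=
        (hbktv n₀).eventually_const_lt (by rw [hlab]; exact hqv)
      obtain ⟨N, hN⟩ := (Filter.eventually_atTop).mp hevq
      refine ⟨N, fun k hk _ x hx h1 h2 => ?_⟩
      have hw := hinv δ⁻¹ hδiB ci x h1 h2
      have hxw : δ⁻¹ Zp ≤ δ⁻¹ x := hmδi (Subtype.coe_le_coe.mp
        (by rw [hZpv]; exact (hbound ci x hx h1 h2).1))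
      have hsn₀w : ((s n₀ : XX):ℝ) ≤ ↑(δ⁻¹ x) := le_trans hn₀2.le (Subtype.coe_le_coe.mpr hxw)
      have hge : ((bk k (s n₀) : XX):ℝ) ≤ ((bk k (δ⁻¹ x) : XX):ℝ) :=
        Subtype.coe_le_coe.mpr (hmbk k (Subtype.coe_le_coe.mp hsn₀w))
      have hbkw := hinv (bk k) (hbkB k) ci (δ⁻¹ x) hw.1 hw.2
      exact hnotK _ hbkw.1 hbkw.2 (Or.inr (lt_of_lt_of_le (hN k hk) hge))
    rcases eq_or_lt_of_le (hthle ci hciF) with hthv | hthv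
    · -- CASE B : threshold = v, push everything down
      obtain ⟨Zq, hZqm, hZqv⟩ := hqmem ci hciK
      have hW := hinv δ⁻¹ hδiB ci Zq
        (by rw [hZqv]; exact lt_of_lt_of_le hup (hpq.1.trans hpq.2))
        (by rw [hZqv]; exact hqv)
      obtain ⟨n₁, hn₁1, hn₁2⟩ := exists_seq_in_Ioo s hs (↑(δ⁻¹ Zq)) (v ci) hW.2
        (δ⁻¹ Zq).2.1 (hFv01 _ (hvmem ci).1).2
      have hlab : ((e n₁ : XX):ℝ) = u ci := hlabu ci hciF n₁ (lt_trans hW.1 hn₁1) hn₁2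
        (by rw [hthv]; exact hn₁2)
      have hevp : ∀ᶠ k in atTop, ((bk k (s n₁) : XX):ℝ) < p ci :=
        (hbktv n₁).eventually_lt_const (by rw [hlab]; exact hup)
      obtain ⟨N, hN⟩ := (Filter.eventually_atTop).mp hevp
      refine ⟨N, fun k hk _ x hx h1 h2 => ?_⟩
      have hw := hinv δ⁻¹ hδiB ci x h1 h2
      have hxw : δ⁻¹ x ≤ δ⁻¹ Zq := hmδi (Subtype.coe_le_coe.mp
        (by rw [hZqv]; exact (hbound ci x hx h1 h2).2))
      have hsn₁w : ((δ⁻¹ x : XX):ℝ) ≤ ↑(s n₁) := le_trans (Subtype.coe_le_coe.mpr hxw) hn₁1.le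
      have hle2 : ((bk k (δ⁻¹ x) : XX):ℝ) ≤ ((bk k (s n₁) : XX):ℝ) :=
        Subtype.coe_le_coe.mpr (hmbk k (Subtype.coe_le_coe.mp hsn₁w))
      have hbkw := hinv (bk k) (hbkB k) ci (δ⁻¹ x) hw.1 hw.2
      exact hnotK _ hbkw.1 hbkw.2 (Or.inl (lt_of_le_of_lt hle2 (hN k hk)))
    · -- CASE C : interior threshold, split at a gap
      have hTv := hTval ci hciF
      have hu1 : u ci < ((T ci : XX):ℝ) := by rw [hTv]; exact hthu
      have hv1 : ((T ci : XX):ℝ) < v ci := by rw [hTv]; exact hthv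
      have hδT := hinv δ hδB ci (T ci) hu1 hv1
      have hside : ((δ (T ci) : XX):ℝ) < p ci ∨ q ci < ((δ (T ci) : XX):ℝ) := by
        rcases not_and_or.mp (hL i hit) with h | h
        exacts [Or.inl (not_le.mp h), Or.inr (not_le.mp h)]
      obtain ⟨lo, hi, hzone, hδTz⟩ : ∃ lo hi : ℝ,
          (∀ y : XX, lo < ↑y → (y:ℝ) < hi → ((y:ℝ) < p ci ∨ q ci < (y:ℝ))) ∧
          ((δ (T ci) : XX):ℝ) ∈ Ioo lo hi := by
        rcases hside with h | h
        · exact ⟨u ci, p ci, fun y hy1 hy2 => Or.inl hy2, ⟨hδT.1, h⟩⟩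
        · exact ⟨q ci, v ci, fun y hy1 hy2 => Or.inr hy1, ⟨h, hδT.2⟩⟩
      have hVopen : IsOpen (⇑δ ⁻¹' (Subtype.val ⁻¹' (Ioo lo hi))) :=
        ((isOpen_Ioo.preimage continuous_subtype_val).preimage (hB δ hδB).1)
      obtain ⟨ε, hε, hball⟩ := Metric.isOpen_iff.mp hVopen _ hδTz
      set η := min ε (min (th ci - u ci) (v ci - th ci)) with hηdef
      have hη : 0 < η := lt_min hε (lt_min (by linarith) (by linarith))
      have hη1 : η ≤ th ci - u ci := le_trans (min_le_right _ _) (min_le_left _ _)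
      have hη2 : η ≤ v ci - th ci := le_trans (min_le_right _ _) (min_le_right _ _)
      have hηε : η ≤ ε := min_le_left _ _
      have hu0 : (0:ℝ) ≤ u ci := (hFv01 _ (humem ci).1).1
      have hv1' : v ci ≤ 1 := (hFv01 _ (hvmem ci).1).2
      obtain ⟨n₂, hn₂1, hn₂2⟩ := exists_seq_in_Ioo s hs (th ci - η) (th ci)
        (by linarith) (by linarith) (hthmem ci hciF).2
      obtain ⟨n₃, hn₃1, hn₃2⟩ := exists_seq_in_Ioo s hs (th ci) (th ci + η)
        (by linarith) (hthmem ci hciF).1 (by linarith)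
      have hlab₂ : ((e n₂ : XX):ℝ) = u ci := hlabu ci hciF n₂ (by linarith)
        (by linarith) hn₂2
      have hlab₃ : ((e n₃ : XX):ℝ) = v ci := hlabv ci hciF n₃ (by linarith)
        (by linarith) hn₃1
      have hball₂ : s n₂ ∈ Metric.ball (T ci) ε := by
        rw [Metric.mem_ball, Subtype.dist_eq, Real.dist_eq, hTv]
        rw [abs_lt]
        constructor <;> linarith
      have hball₃ : s n₃ ∈ Metric.ball (T ci) ε := by
        rw [Metric.mem_ball, Subtype.dist_eq, Real.dist_eq, hTv]
        rw [abs_lt]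
        constructor <;> linarith
      have hs₂V : ((δ (s n₂) : XX):ℝ) ∈ Ioo lo hi := hball hball₂
      have hs₃V : ((δ (s n₃) : XX):ℝ) ∈ Ioo lo hi := hball hball₃
      have hev₂ : ∀ᶠ k in atTop, ((bk k (s n₂) : XX):ℝ) < p ci :=
        (hbktv n₂).eventually_lt_const (by rw [hlab₂]; exact hup)
      have hev₃ : ∀ᶠ k in atTop, q ci < ((bk k (s n₃) : XX):ℝ) :=
        (hbktv n₃).eventually_const_lt (by rw [hlab₃]; exact hqv)
      obtain ⟨N, hN⟩ := (Filter.eventually_atTop).mp (hev₂.and hev₃)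
      refine ⟨N, fun k hk _ x hx h1 h2 => ?_⟩
      have hw := hinv δ⁻¹ hδiB ci x h1 h2
      have hcase : δ⁻¹ x < s n₂ ∨ s n₃ < δ⁻¹ x := by
        by_contra hcon
        push_neg at hcon
        have hmδ : Monotone ⇑δ := (hB δ hδB).2
        have hl' : δ (s n₂) ≤ x := by
          have := hmδ hcon.1
          rwa [Equiv.Perm.inv_def, Equiv.apply_symm_apply] at this
        have hr' : x ≤ δ (s n₃) := by
          have := hmδ hcon.2
          rwa [Equiv.Perm.inv_def, Equiv.apply_symm_apply] at this
        have hx1 : lo < (x:ℝ) := lt_of_lt_of_le hs₂V.1 (Subtype.coe_le_coe.mpr hl')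
        have hx2 : (x:ℝ) < hi := lt_of_le_of_lt (Subtype.coe_le_coe.mpr hr') hs₃V.2
        have hb := hbound ci x hx h1 h2
        rcases hzone x hx1 hx2 with h | h
        exacts [absurd hb.1 (not_le.mpr h), absurd hb.2 (not_le.mpr h)]
      have hbkw := hinv (bk k) (hbkB k) ci (δ⁻¹ x) hw.1 hw.2
      rcases hcase with hc | hc
      · have hle2 : ((bk k (δ⁻¹ x) : XX):ℝ) ≤ ((bk k (s n₂) : XX):ℝ) :=
          Subtype.coe_le_coe.mpr (hmbk k hc.le)
        exact hnotK _ hbkw.1 hbkw.2 (Or.inl (lt_of_le_of_lt hle2 (hN k hk).1))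
      · have hge2 : ((bk k (s n₃) : XX):ℝ) ≤ ((bk k (δ⁻¹ x) : XX):ℝ) :=
          Subtype.coe_le_coe.mpr (hmbk k hc.le)
        exact hnotK _ hbkw.1 hbkw.2 (Or.inr (lt_of_lt_of_le (hN k hk).2 hge2))
  -- assemble
  choose Nf hNf using hper
  refine ⟨bk (t.sup Nf) * δ⁻¹, B.mul_mem (hbkB _) hδiB, ?_⟩
  intro x hx
  obtain ⟨i, hit, hxS⟩ := Set.mem_iUnion₂.mp (ht hx)
  have := hNf i (t.sup Nf) (Finset.le_sup hit) hit x hx hxS.1 hxS.2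
  simpa [Equiv.Perm.mul_apply] using this


section Alg
variable {G : Type*} [Group G]

lemma L1 {a a' y : G} (h : Commute a' y) : ⁅a * a', y⁆ = ⁅a, y⁆ := by
  simp only [commutatorElement_def, mul_inv_rev]
  have : a' * y * a'⁻¹ = y := by
    rw [h.eq]; group
  calc a * a' * y * (a'⁻¹ * a⁻¹) * y⁻¹ = a * (a' * y * a'⁻¹) * a⁻¹ * y⁻¹ := by group
    _ = a * y * a⁻¹ * y⁻¹ := by rw [this]

lemma L2 {a c c' : G} (h : Commute c' a) : ⁅a, c * c'⁆ = ⁅a, c⁆ := by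
  simp only [commutatorElement_def, mul_inv_rev]
  have : c' * a⁻¹ * c'⁻¹ = a⁻¹ := by
    rw [h.inv_right.eq]; group
  calc a * (c * c') * a⁻¹ * (c'⁻¹ * c⁻¹) = a * c * (c' * a⁻¹ * c'⁻¹) * c⁻¹ := by group
    _ = a * c * a⁻¹ * c⁻¹ := by rw [this]

lemma L3 {a a' c c' : G} (h1 : Commute a' c) (h2 : Commute a' c') (h3 : Commute c' a) :
    ⁅a * a', c * c'⁆ = ⁅a, c⁆ := by
  rw [L1 (h1.mul_right h2), L2 h3]
end Alg

section Supp
variable {α : Type*}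

lemma moved_apply {f : Equiv.Perm α} {x : α} (h : f x ≠ x) : f (f x) ≠ f x := by
  intro he
  exact h (f.injective he)

lemma commute_of_disjoint_supp {f g : Equiv.Perm α} {S T : Set α}
    (hf : ∀ x, f x ≠ x → x ∈ S) (hg : ∀ x, g x ≠ x → x ∈ T)
    (hST : ∀ x, x ∈ S → x ∉ T) : Commute f g := by
  have key : ∀ x, f (g x) = g (f x) := by
    intro x
    by_cases hfx : f x = x
    · by_cases hgx : g x = x
      · simp [hfx, hgx]
      · have : g x ∈ T := hg _ (moved_apply hgx)
        have hfgx : f (g x) = g x := by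
          by_contra hne
          exact hST _ (hf _ hne) this
        rw [hfgx, hfx]
    · have hxS : x ∈ S := hf _ hfx
      have hgx : g x = x := by
        by_contra hne
        exact hST _ hxS (hg _ hne)
      have : f x ∈ S := hf _ (moved_apply hfx)
      have hgfx : g (f x) = f x := by
        by_contra hne
        exact hST _ this (hg _ hne)
      rw [hgx, hgfx]
  ext x
  simp [Equiv.Perm.mul_apply, key]
end Supp

theorem stmt2
    (A B : Subgroup (Equiv.Perm (Icc (0:ℝ) 1)))
    (hA : ∀ g ∈ A, Continuous (⇑(g : Equiv.Perm (Icc (0:ℝ) 1))) ∧ Monotone ⇑g)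
    (hB : ∀ g ∈ B, Continuous (⇑(g : Equiv.Perm (Icc (0:ℝ) 1))) ∧ Monotone ⇑g)
    (hsupp : ∀ a ∈ A, closure {x | a x ≠ x} ⊆ {x | ∃ b ∈ B, b x ≠ x}) :
    ⁅A, A⁆ ≤ Subgroup.closure
      {x | ∃ a₀ ∈ A, ∃ a₁ ∈ A, ∃ b₀ ∈ B, ∃ b₁ ∈ B, x = ⁅⁅a₀, b₀⁆, ⁅a₁, b₁⁆⁆} := by
  rw [Subgroup.commutator_le]
  intro a haA c hcA
  classical
  set K : Set XX := closure {x | a x ≠ x} ∪ closure {x | c x ≠ x} with hKdef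
  have hKc : IsClosed K := isClosed_closure.union isClosed_closure
  have hKO : ∀ x ∈ K, ∃ b ∈ B, b x ≠ x := by
    intro x hx
    rcases hx with h | h
    exacts [hsupp a haA h, hsupp c hcA h]
  obtain ⟨b₀, hb₀B, hb₀d⟩ := displace B hB K hKc hKO
  set K2 : Set XX := K ∪ (⇑b₀ '' K) with hK2
  have hK2c : IsClosed K2 := hKc.union ((hKc.isCompact.image (hB b₀ hb₀B).1).isClosed)
  have hK2O : ∀ x ∈ K2, ∃ b ∈ B, b x ≠ x := by
    rintro x (hx | ⟨y, hy, rfl⟩)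
    · exact hKO x hx
    · obtain ⟨b, hbB, hbz⟩ := hKO y hy
      refine ⟨b₀ * b * b₀⁻¹, B.mul_mem (B.mul_mem hb₀B hbB) (B.inv_mem hb₀B), ?_⟩
      simp only [Equiv.Perm.mul_apply, Equiv.Perm.inv_def, Equiv.symm_apply_apply]
      intro h
      exact hbz (b₀.injective h)
  obtain ⟨b₁, hb₁B, hb₁d⟩ := displace B hB K2 hK2c hK2O
  have d1 : ∀ x, x ∈ K → x ∈ ⇑b₀ '' K → False := by
    rintro x hx ⟨y, hy, rfl⟩
    exact hb₀d y hy hx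
  have d2 : ∀ x, x ∈ K → x ∈ ⇑b₁ '' K → False := by
    rintro x hx ⟨y, hy, rfl⟩
    exact hb₁d y (Or.inl hy) (Or.inl hx)
  have d3 : ∀ x, x ∈ ⇑b₀ '' K → x ∈ ⇑b₁ '' K → False := by
    rintro x hx ⟨y, hy, rfl⟩
    exact hb₁d y (Or.inl hy) (Or.inr hx)
  have hsa : ∀ x : XX, a x ≠ x → x ∈ K := fun x hx => Or.inl (subset_closure hx)
  have hsc : ∀ x : XX, c x ≠ x → x ∈ K := fun x hx => Or.inr (subset_closure hx)
  set a' : Equiv.Perm XX := b₀ * a⁻¹ * b₀⁻¹ with ha'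
  set c' : Equiv.Perm XX := b₁ * c⁻¹ * b₁⁻¹ with hc'
  have hsa' : ∀ x : XX, a' x ≠ x → x ∈ ⇑b₀ '' K := by
    intro x hx
    have h1 : a⁻¹ (b₀⁻¹ x) ≠ b₀⁻¹ x := by
      intro h
      apply hx
      rw [ha']
      rw [Equiv.Perm.inv_def, Equiv.Perm.inv_def] at h
      simp [Equiv.Perm.mul_apply, h]
    have h2 : a (b₀⁻¹ x) ≠ b₀⁻¹ x := by
      intro h
      apply h1
      calc a⁻¹ (b₀⁻¹ x) = a⁻¹ (a (b₀⁻¹ x)) := by rw [h]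
        _ = b₀⁻¹ x := a.symm_apply_apply _
    exact ⟨b₀⁻¹ x, hsa _ h2, b₀.apply_symm_apply x⟩
  have hsc' : ∀ x : XX, c' x ≠ x → x ∈ ⇑b₁ '' K := by
    intro x hx
    have h1 : c⁻¹ (b₁⁻¹ x) ≠ b₁⁻¹ x := by
      intro h
      apply hx
      rw [hc']
      rw [Equiv.Perm.inv_def, Equiv.Perm.inv_def] at h
      simp [Equiv.Perm.mul_apply, h]
    have h2 : c (b₁⁻¹ x) ≠ b₁⁻¹ x := by
      intro h
      apply h1
      calc c⁻¹ (b₁⁻¹ x) = c⁻¹ (c (b₁⁻¹ x)) := by rw [h]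
        _ = b₁⁻¹ x := c.symm_apply_apply _
    exact ⟨b₁⁻¹ x, hsc _ h2, b₁.apply_symm_apply x⟩
  have com1 : Commute a' c := commute_of_disjoint_supp hsa' hsc
    (fun x hx hxK => d1 x hxK hx)
  have com2 : Commute a' c' := commute_of_disjoint_supp hsa' hsc'
    (fun x hx hx' => d3 x hx hx')
  have com3 : Commute c' a := commute_of_disjoint_supp hsc' hsa
    (fun x hx hxK => d2 x hxK hx)
  have hca : ⁅a, b₀⁆ = a * a' := by
    rw [commutatorElement_def, ha']
    group
  have hcc : ⁅c, b₁⁆ = c * c' := by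
    rw [commutatorElement_def, hc']
    group
  have hid : ⁅⁅a, b₀⁆, ⁅c, b₁⁆⁆ = ⁅a, c⁆ := by
    rw [hca, hcc]
    exact L3 com1 com2 com3
  rw [← hid]
  exact Subgroup.subset_closure ⟨a, haA, c, hcA, b₀, hb₀B, b₁, hb₁B, rfl⟩
end
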